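/- Let u, m : ℝ⁴ → ℝ be smooth functions of (x, y, z, t) with t ≠ 0 on the domain, satisfying the covering equations m_t = u_z m_x − (z/t) m_z and m_y = u_x m_x − (z/t) m_x. Then m_x · (u_{yz} − u_{tx} + u_z u_{xx} − u_x u_{xz}) = 0; in particular, wherever m_x ≠ 0, the function u satisfies the reduced quasi-classical self-dual Yang-Mills equation u_{yz} = u_{tx} − u_z u_{xx} + u_x u_{xz}. -/

import Mathlib

/-- Directional (partial) derivative of a function of `(x, y, z, t) ∈ ℝ⁴`. -/
noncomputable def pd (v : ℝ × ℝ × ℝ × ℝ) (f : ℝ × ℝ × ℝ × ℝ → ℝ) : ℝ × ℝ × ℝ × ℝ → ℝ :=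
  fun p => fderiv ℝ f p v

/-- Unit direction of `x`. -/
def ex : ℝ × ℝ × ℝ × ℝ := (1, 0, 0, 0)
/-- Unit direction of `y`. -/
def ey : ℝ × ℝ × ℝ × ℝ := (0, 1, 0, 0)
/-- Unit direction of `z`. -/
def ez : ℝ × ℝ × ℝ × ℝ := (0, 0, 1, 0)
/-- Unit direction of `t`. -/
def et : ℝ × ℝ × ℝ × ℝ := (0, 0, 0, 1)

/-- The left-hand side of the rYME `u_{yz} - u_{tx} + u_z u_{xx} - u_x u_{xz} = 0`. -/
noncomputable def ryme (u : ℝ × ℝ × ℝ × ℝ → ℝ) : ℝ × ℝ × ℝ × ℝ → ℝ :=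
  fun p => pd ey (pd ez u) p - pd et (pd ex u) p
    + pd ez u p * pd ex (pd ex u) p - pd ex u p * pd ex (pd ez u) p

abbrev E4 := ℝ × ℝ × ℝ × ℝ

noncomputable def Pz : E4 →L[ℝ] ℝ :=
  (ContinuousLinearMap.fst ℝ ℝ ℝ).comp
    ((ContinuousLinearMap.snd ℝ ℝ (ℝ × ℝ)).comp (ContinuousLinearMap.snd ℝ ℝ (ℝ × ℝ × ℝ)))

noncomputable def Pt : E4 →L[ℝ] ℝ :=
  (ContinuousLinearMap.snd ℝ ℝ ℝ).comp
    ((ContinuousLinearMap.snd ℝ ℝ (ℝ × ℝ)).comp (ContinuousLinearMap.snd ℝ ℝ (ℝ × ℝ × ℝ)))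

lemma Pz_apply (v : E4) : Pz v = v.2.2.1 := rfl
lemma Pt_apply (v : E4) : Pt v = v.2.2.2 := rfl

lemma contDiff_pd (f : E4 → ℝ) (hf : ContDiff ℝ (⊤ : ℕ∞) f) (v : E4) :
    ContDiff ℝ (⊤ : ℕ∞) (pd v f) := by
  have h : ContDiff ℝ (⊤ : ℕ∞) (fderiv ℝ f) :=
    hf.fderiv_right (m := (⊤ : ℕ∞)) (by norm_cast)
  exact (ContinuousLinearMap.apply ℝ ℝ v).contDiff.comp h

lemma diff_pd (f : E4 → ℝ) (hf : ContDiff ℝ (⊤ : ℕ∞) f) (v : E4) (p : E4) :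
    DifferentiableAt ℝ (pd v f) p :=
  (contDiff_pd f hf v).differentiable (by simp) p

lemma pd_pd (f : E4 → ℝ) (hf : ContDiff ℝ (⊤ : ℕ∞) f) (v w : E4) (p : E4) :
    pd v (pd w f) p = fderiv ℝ (fderiv ℝ f) p v w := by
  have h : DifferentiableAt ℝ (fderiv ℝ f) p :=
    ((hf.fderiv_right (m := (⊤ : ℕ∞)) (by norm_cast)).differentiable
      (by simp)) p
  show fderiv ℝ (fun q => (fderiv ℝ f q) w) p v = _
  rw [fderiv_clm_apply h (differentiableAt_const w)]
  simp

lemma pd_comm (f : E4 → ℝ) (hf : ContDiff ℝ (⊤ : ℕ∞) f) (v w : E4) (p : E4) :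
    pd v (pd w f) p = pd w (pd v f) p := by
  rw [pd_pd f hf v w p, pd_pd f hf w v p]
  exact (hf.contDiffAt.isSymmSndFDerivAt (by rw [minSmoothness_of_isRCLikeNormedField]; exact WithTop.coe_le_coe.mpr le_top)) v w

lemma pd_sub_mul (v : E4) (A B C D : E4 → ℝ) (p : E4)
    (hA : DifferentiableAt ℝ A p) (hB : DifferentiableAt ℝ B p)
    (hC : DifferentiableAt ℝ C p) (hD : DifferentiableAt ℝ D p) :
    pd v (fun q => A q * B q - C q * D q) p
      = (pd v A p * B p + A p * pd v B p) - (pd v C p * D p + C p * pd v D p) := by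
  show fderiv ℝ _ p v = _
  rw [fderiv_fun_sub (f := fun q => A q * B q) (g := fun q => C q * D q) (hA.mul hB) (hC.mul hD), fderiv_fun_mul hA hB, fderiv_fun_mul hC hD]
  simp [pd]
  ring

noncomputable def cc : E4 → ℝ := fun q => q.2.2.1 / q.2.2.2

lemma hasFDerivAt_cc (p : E4) (ht : p.2.2.2 ≠ 0) :
    HasFDerivAt cc (p.2.2.1 • ((ContinuousLinearMap.smulRight (1 : ℝ →L[ℝ] ℝ)
      (-(p.2.2.2 ^ 2)⁻¹)).comp Pt) + ((p.2.2.2)⁻¹ : ℝ) • Pz) p := by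
  have hz : HasFDerivAt (fun q : E4 => q.2.2.1) Pz p := Pz.hasFDerivAt
  have ht' : HasFDerivAt (fun q : E4 => q.2.2.2) Pt p := Pt.hasFDerivAt
  have hinv : HasFDerivAt (fun q : E4 => (q.2.2.2)⁻¹)
      ((ContinuousLinearMap.smulRight (1 : ℝ →L[ℝ] ℝ) (-(p.2.2.2 ^ 2)⁻¹)).comp Pt) p :=
    (hasFDerivAt_inv ht).comp p ht'
  have := hz.mul hinv
  simpa [show cc = fun q : E4 => q.2.2.1 * (q.2.2.2)⁻¹ from funext fun q => div_eq_mul_inv _ _, Pi.mul_def] using this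

lemma diff_cc (p : E4) (ht : p.2.2.2 ≠ 0) : DifferentiableAt ℝ cc p :=
  (hasFDerivAt_cc p ht).differentiableAt

lemma pd_cc (v : E4) (p : E4) (ht : p.2.2.2 ≠ 0) :
    pd v cc p = (p.2.2.2)⁻¹ * v.2.2.1 - p.2.2.1 / p.2.2.2 ^ 2 * v.2.2.2 := by
  show fderiv ℝ cc p v = _
  rw [(hasFDerivAt_cc p ht).fderiv]
  simp [Pz_apply, Pt_apply]
  ring

/-- Compatibility of the level-zero `m`-covering: where `t ≠ 0`, if
`m_t = u_z m_x - (z/t) m_z` and `m_y = u_x m_x - (z/t) m_x`, then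
`m_x · (u_{yz} - u_{tx} + u_z u_{xx} - u_x u_{xz}) = 0`; wherever moreover
`m_x ≠ 0`, `u` satisfies the rYME. -/
theorem m_covering_compatibility (u m : ℝ × ℝ × ℝ × ℝ → ℝ)
    (hu : ContDiff ℝ (⊤ : ℕ∞) u) (hm : ContDiff ℝ (⊤ : ℕ∞) m)
    (h1 : ∀ p : ℝ × ℝ × ℝ × ℝ, p.2.2.2 ≠ 0 →
      pd et m p = pd ez u p * pd ex m p - (p.2.2.1 / p.2.2.2) * pd ez m p)
    (h2 : ∀ p : ℝ × ℝ × ℝ × ℝ, p.2.2.2 ≠ 0 →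
      pd ey m p = pd ex u p * pd ex m p - (p.2.2.1 / p.2.2.2) * pd ex m p) :
    ∀ p : ℝ × ℝ × ℝ × ℝ, p.2.2.2 ≠ 0 →
      pd ex m p * ryme u p = 0 ∧ (pd ex m p ≠ 0 → ryme u p = 0) := by
  intro p ht
  have hcont : Continuous fun q : E4 => q.2.2.2 := by fun_prop
  have hopen : IsOpen {q : E4 | q.2.2.2 ≠ 0} :=
    isOpen_ne.preimage hcont
  have hnhds : {q : E4 | q.2.2.2 ≠ 0} ∈ nhds p := hopen.mem_nhds ht
  set F : E4 → ℝ := fun q => pd ez u q * pd ex m q - cc q * pd ez m q with hFdef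
  set G : E4 → ℝ := fun q => pd ex u q * pd ex m q - cc q * pd ex m q with hGdef
  have heF : pd et m =ᶠ[nhds p] F := by
    filter_upwards [hnhds] with q hq
    simpa [hFdef, cc] using h1 q hq
  have heG : pd ey m =ᶠ[nhds p] G := by
    filter_upwards [hnhds] with q hq
    simpa [hGdef, cc] using h2 q hq
  -- differentiability facts
  have dux := diff_pd u hu ex
  have duz := diff_pd u hu ez
  have dmx := diff_pd m hm ex
  have dmz := diff_pd m hm ez
  have dc := diff_cc p ht
  -- pd of cc in the four directions
  have pcx : pd ex cc p = 0 := by rw [pd_cc ex p ht]; simp [ex]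
  have pcy : pd ey cc p = 0 := by rw [pd_cc ey p ht]; simp [ey]
  have pcz : pd ez cc p = (p.2.2.2)⁻¹ := by rw [pd_cc ez p ht]; simp [ez]
  have pct : pd et cc p = -(p.2.2.1 / p.2.2.2 ^ 2) := by rw [pd_cc et p ht]; simp [et]
  -- mixed second derivatives of m via the covering equations
  have hXY : pd ey (pd ex m) p
      = (pd ex (pd ex u) p * pd ex m p + pd ex u p * pd ex (pd ex m) p)
        - (0 * pd ex m p + cc p * pd ex (pd ex m) p) := by
    rw [pd_comm m hm ey ex p]
    have e : pd ex (pd ey m) p = pd ex G p := by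
      show fderiv ℝ (pd ey m) p ex = fderiv ℝ G p ex
      rw [heG.fderiv_eq]
    rw [e, hGdef, pd_sub_mul ex _ _ _ _ p (dux p) (dmx p) dc (dmx p), pcx]
  have hZY : pd ey (pd ez m) p
      = (pd ex (pd ez u) p * pd ex m p + pd ex u p * pd ez (pd ex m) p)
        - ((p.2.2.2)⁻¹ * pd ex m p + cc p * pd ez (pd ex m) p) := by
    rw [pd_comm m hm ey ez p]
    have e : pd ez (pd ey m) p = pd ez G p := by
      show fderiv ℝ (pd ey m) p ez = fderiv ℝ G p ez
      rw [heG.fderiv_eq]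
    rw [e, hGdef, pd_sub_mul ez _ _ _ _ p (dux p) (dmx p) dc (dmx p), pcz,
      pd_comm u hu ez ex p, pd_comm m hm ez ex p]
  have hXT : pd et (pd ex m) p
      = (pd ex (pd ez u) p * pd ex m p + pd ez u p * pd ex (pd ex m) p)
        - (0 * pd ez m p + cc p * pd ez (pd ex m) p) := by
    rw [pd_comm m hm et ex p]
    have e : pd ex (pd et m) p = pd ex F p := by
      show fderiv ℝ (pd et m) p ex = fderiv ℝ F p ex
      rw [heF.fderiv_eq]
    rw [e, hFdef, pd_sub_mul ex _ _ _ _ p (duz p) (dmx p) dc (dmz p), pcx,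
      pd_comm u hu ex ez p, pd_comm m hm ex ez p]
  have hTY : pd ey (pd et m) p
      = (pd ey (pd ez u) p * pd ex m p + pd ez u p * pd ey (pd ex m) p)
        - (0 * pd ez m p + cc p * pd ey (pd ez m) p) := by
    have e : pd ey (pd et m) p = pd ey F p := by
      show fderiv ℝ (pd et m) p ey = fderiv ℝ F p ey
      rw [heF.fderiv_eq]
    rw [e, hFdef, pd_sub_mul ey _ _ _ _ p (duz p) (dmx p) dc (dmz p), pcy]
  have hYT : pd et (pd ey m) p
      = (pd et (pd ex u) p * pd ex m p + pd ex u p * pd et (pd ex m) p)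
        - (-(p.2.2.1 / p.2.2.2 ^ 2) * pd ex m p + cc p * pd et (pd ex m) p) := by
    have e : pd et (pd ey m) p = pd et G p := by
      show fderiv ℝ (pd ey m) p et = fderiv ℝ G p et
      rw [heG.fderiv_eq]
    rw [e, hGdef, pd_sub_mul et _ _ _ _ p (dux p) (dmx p) dc (dmx p), pct]
  have hc := pd_comm m hm ey et p
  rw [hTY, hYT, hXY, hZY, hXT] at hc
  have hcc : cc p = p.2.2.1 / p.2.2.2 := rfl
  rw [hcc] at hc
  have key : pd ex m p * ryme u p = 0 := by
    simp only [ryme]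
    linear_combination hc
  exact ⟨key, fun hmx => by
    rcases mul_eq_zero.1 key with h | h
    · exact absurd h hmx
    · exact h⟩
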